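/- For every integer k ≥ 2, there exists a finite connected simple graph G of order n = k + 2^k and diameter 2 such that G is uniquely dimensional with β(G) = k and G has a vertex of degree n − 1. -/

import Mathlib

open SimpleGraph

/-- `W` is a resolving set for `G`: any two distinct vertices are distinguished
by their distance to some vertex of `W`. -/
def IsResolvingSet {V : Type*} (G : SimpleGraph V) (W : Finset V) : Prop :=
  ∀ u v : V, u ≠ v → ∃ w ∈ W, G.dist u w ≠ G.dist v w

/-- The metric dimension of `G`: the minimum cardinality of a resolving set. -/
noncomputable def metricDim {V : Type*} (G : SimpleGraph V) : ℕ :=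
  sInf {k | ∃ W : Finset V, IsResolvingSet G W ∧ W.card = k}

/-- `B` is a metric basis: a resolving set of minimum cardinality. -/
def IsMetricBasis {V : Type*} (G : SimpleGraph V) (B : Finset V) : Prop :=
  IsResolvingSet G B ∧ B.card = metricDim G

/-- `G` is uniquely dimensional: it has exactly one metric basis. -/
def UniquelyDimensional {V : Type*} (G : SimpleGraph V) : Prop :=
  ∃! B : Finset V, IsMetricBasis G B

/-- `G` is uniquely `k`-dimensional: a unique metric basis and metric dimension `k`. -/
def UniquelyKDimensional {V : Type*} (G : SimpleGraph V) (k : ℕ) : Prop :=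
  UniquelyDimensional G ∧ metricDim G = k

namespace Stmt9Aux

variable (k : ℕ)

/-- The construction: vertices `0..k-1` are "basis" vertices `w_i`; vertex `k + c`
(for `c < 2^k`) is the "subset" vertex for the set with characteristic code `c`.
Subset vertices form a clique; `w_i` is adjacent to `k + c` iff bit `i` of `c` is set. -/
def Gk : SimpleGraph (Fin (k + 2 ^ k)) where
  Adj x y :=
    (x.val < k ∧ k ≤ y.val ∧ (y.val - k).testBit x.val = true) ∨
    (y.val < k ∧ k ≤ x.val ∧ (x.val - k).testBit y.val = true) ∨
    (k ≤ x.val ∧ k ≤ y.val ∧ x ≠ y)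
  symm := by
    refine ⟨?_⟩
    intro x y h
    rcases h with h | h | h
    · exact Or.inr (Or.inl h)
    · exact Or.inl h
    · exact Or.inr (Or.inr ⟨h.2.1, h.1, h.2.2.symm⟩)
  loopless := by
    refine ⟨?_⟩
    intro x h
    rcases h with h | h | h
    · omega
    · omega
    · exact h.2.2 rfl

lemma onelt : 1 ≤ 2 ^ k := Nat.one_le_two_pow

/-- The universal vertex: the subset vertex of the full set. -/
def full : Fin (k + 2 ^ k) := ⟨k + (2 ^ k - 1), by have := onelt k; omega⟩

lemma k_le_full : k ≤ (full k).val := by simp [full]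

lemma adj_full {x : Fin (k + 2 ^ k)} (hx : x ≠ full k) : (Gk k).Adj (full k) x := by
  by_cases h : x.val < k
  · refine Or.inr (Or.inl ⟨h, k_le_full k, ?_⟩)
    have : (full k).val - k = 2 ^ k - 1 := by simp [full]
    rw [this, Nat.testBit_two_pow_sub_one]
    simpa using h
  · exact Or.inr (Or.inr ⟨k_le_full k, le_of_not_gt h, fun he => hx he.symm⟩)

lemma reachable_full (x : Fin (k + 2 ^ k)) : (Gk k).Reachable x (full k) := by
  by_cases h : x = full k
  · exact h ▸ Reachable.refl x
  · exact ((adj_full k h).symm).reachable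

lemma connected : (Gk k).Connected := by
  have : Nonempty (Fin (k + 2 ^ k)) := ⟨full k⟩
  exact ⟨fun u v => (reachable_full k u).trans (reachable_full k v).symm⟩

lemma dist_le_two (u v : Fin (k + 2 ^ k)) : (Gk k).dist u v ≤ 2 := by
  by_cases he : u = v
  · subst he; simp [SimpleGraph.dist_self]
  by_cases ha : (Gk k).Adj u v
  · calc (Gk k).dist u v ≤ ha.toWalk.length := SimpleGraph.dist_le _
      _ ≤ 2 := by simp
  · have hu : u ≠ full k := by
      rintro rfl
      exact ha (adj_full k (fun h => he h.symm))
    have hv : v ≠ full k := by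
      rintro rfl
      exact ha ((adj_full k he).symm)
    calc (Gk k).dist u v
        ≤ (Walk.cons ((adj_full k hu).symm) (Walk.cons (adj_full k hv) Walk.nil)).length :=
          SimpleGraph.dist_le _
      _ = 2 := by simp

lemma dist_pos {u v : Fin (k + 2 ^ k)} (h : u ≠ v) : 1 ≤ (Gk k).dist u v :=
  Nat.one_le_iff_ne_zero.mpr (Nat.pos_iff_ne_zero.mp ((connected k).pos_dist_of_ne h))

lemma dist_eq_two {u v : Fin (k + 2 ^ k)} (h : u ≠ v) (ha : ¬ (Gk k).Adj u v) :
    (Gk k).dist u v = 2 := by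
  have h1 := dist_pos k h
  have h2 := dist_le_two k u v
  have h3 : (Gk k).dist u v ≠ 1 := fun hc => ha (SimpleGraph.dist_eq_one_iff_adj.mp hc)
  omega

lemma dist_mem {u v : Fin (k + 2 ^ k)} (h : u ≠ v) :
    (Gk k).dist u v = 1 ∨ (Gk k).dist u v = 2 := by
  have h1 := dist_pos k h
  have h2 := dist_le_two k u v
  omega

/-- Adjacency between basis vertex and subset vertex. -/
lemma adj_w_u {x y : Fin (k + 2 ^ k)} (hx : x.val < k) (hy : k ≤ y.val) :
    (Gk k).Adj x y ↔ (y.val - k).testBit x.val = true := by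
  constructor
  · rintro (h | h | h) <;> first | exact h.2.2 | omega
  · intro h; exact Or.inl ⟨hx, hy, h⟩

lemma not_adj_ww {x y : Fin (k + 2 ^ k)} (hx : x.val < k) (hy : y.val < k) :
    ¬ (Gk k).Adj x y := by
  rintro (h | h | h) <;> omega

lemma adj_uu {x y : Fin (k + 2 ^ k)} (hx : k ≤ x.val) (hy : k ≤ y.val) (hne : x ≠ y) :
    (Gk k).Adj x y := Or.inr (Or.inr ⟨hx, hy, hne⟩)

/-- distance from a subset vertex to a basis vertex -/
lemma dist_u_w {u w : Fin (k + 2 ^ k)} (hu : k ≤ u.val) (hw : w.val < k) :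
    (Gk k).dist u w = if (u.val - k).testBit w.val then 1 else 2 := by
  have hne : u ≠ w := by intro h; subst h; omega
  by_cases hb : (u.val - k).testBit w.val
  · rw [if_pos hb]
    exact SimpleGraph.dist_eq_one_iff_adj.mpr (((adj_w_u k hw hu).mpr hb).symm)
  · rw [if_neg hb]
    refine dist_eq_two k hne ?_
    intro ha
    exact hb ((adj_w_u k hw hu).mp ha.symm)

/-- The candidate metric basis: the first `k` vertices. -/
def W : Finset (Fin (k + 2 ^ k)) :=
  Finset.filter (fun x => x.val < k) Finset.univ

lemma mem_W {x : Fin (k + 2 ^ k)} : x ∈ W k ↔ x.val < k := by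
  simp [W]

lemma card_W : (W k).card = k := by
  have : W k = Finset.image (fun i : Fin k => (⟨i.val, by have := onelt k; omega⟩ :
      Fin (k + 2 ^ k))) Finset.univ := by
    ext x
    simp only [mem_W, Finset.mem_image, Finset.mem_univ, true_and]
    constructor
    · intro h; exact ⟨⟨x.val, h⟩, by simp⟩
    · rintro ⟨i, rfl⟩; exact i.isLt
  rw [this, Finset.card_image_of_injective _ (fun a b h => by
    simpa [Fin.ext_iff] using h), Finset.card_univ, Fintype.card_fin]

lemma W_resolving : IsResolvingSet (Gk k) (W k) := by
  intro u v huv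
  by_cases hu : u.val < k
  · refine ⟨u, (mem_W k).mpr hu, ?_⟩
    rw [SimpleGraph.dist_self]
    have := dist_pos k (Ne.symm huv)
    omega
  by_cases hv : v.val < k
  · refine ⟨v, (mem_W k).mpr hv, ?_⟩
    rw [SimpleGraph.dist_self]
    have := dist_pos k huv
    omega
  · -- both are subset vertices
    push_neg at hu hv
    have hcu : u.val - k < 2 ^ k := by omega
    have hcv : v.val - k < 2 ^ k := by omega
    have hcne : u.val - k ≠ v.val - k := by
      intro h
      exact huv (Fin.ext (by omega))
    obtain ⟨i, hi⟩ : ∃ i, (u.val - k).testBit i ≠ (v.val - k).testBit i := by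
      by_contra hc
      push_neg at hc
      exact hcne (Nat.eq_of_testBit_eq hc)
    have hik : i < k := by
      by_contra hik
      push_neg at hik
      have h1 : (u.val - k).testBit i = false :=
        Nat.testBit_lt_two_pow (lt_of_lt_of_le hcu (Nat.pow_le_pow_right (by norm_num) hik))
      have h2 : (v.val - k).testBit i = false :=
        Nat.testBit_lt_two_pow (lt_of_lt_of_le hcv (Nat.pow_le_pow_right (by norm_num) hik))
      rw [h1, h2] at hi
      exact hi rfl
    refine ⟨⟨i, by have := onelt k; omega⟩, (mem_W k).mpr hik, ?_⟩
    rw [dist_u_w k hu hik, dist_u_w k hv hik]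
    rcases Bool.eq_false_or_eq_true ((u.val - k).testBit i) with h1 | h1 <;>
      rcases Bool.eq_false_or_eq_true ((v.val - k).testBit i) with h2 | h2 <;>
        simp_all

/-- key counting step: vertices outside a resolving set inject into distance
vectors with entries in `{1,2}`. -/
lemma card_outside_le (B : Finset (Fin (k + 2 ^ k))) (hB : IsResolvingSet (Gk k) B) :
    k + 2 ^ k - B.card ≤ 2 ^ B.card := by
  classical
  set S : Finset (Fin (k + 2 ^ k)) := Finset.univ \ B with hS
  have hcardS : S.card = k + 2 ^ k - B.card := by
    rw [hS, Finset.card_sdiff_of_subset (Finset.subset_univ B), Finset.card_univ, Fintype.card_fin]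
  have : Fintype.card ↥S ≤ Fintype.card (↥B → Bool) := by
    apply Fintype.card_le_of_injective
      (fun v => (fun b => decide ((Gk k).dist v.val b.val = 2)))
    intro v v' hvv'
    by_contra hne
    have hne' : v.val ≠ v'.val := fun h => hne (Subtype.ext h)
    obtain ⟨b, hbB, hbd⟩ := hB v.val v'.val hne'
    have hv2 : v.val ∈ Finset.univ \ B := v.2
    have hv'2 : v'.val ∈ Finset.univ \ B := v'.2
    rw [Finset.mem_sdiff] at hv2 hv'2
    have hvb : v.val ≠ b := fun h => hv2.2 (h ▸ hbB)
    have hv'b : v'.val ≠ b := fun h => hv'2.2 (h ▸ hbB)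
    have h1 := dist_mem k hvb
    have h2 := dist_mem k hv'b
    have := congrFun hvv' ⟨b, hbB⟩
    simp only [decide_eq_decide] at this
    rcases h1 with h1 | h1 <;> rcases h2 with h2 | h2 <;> omega
  rw [Fintype.card_fun, Fintype.card_coe, Fintype.card_coe, Fintype.card_bool] at this
  omega

lemma resolving_card_ge (B : Finset (Fin (k + 2 ^ k))) (hB : IsResolvingSet (Gk k) B)
    (hk : 2 ≤ k) : k ≤ B.card := by
  by_contra hc
  push_neg at hc
  have h1 := card_outside_le k B hB
  have h2 : 2 ^ B.card ≤ 2 ^ (k - 1) :=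
    Nat.pow_le_pow_right (by norm_num) (by omega)
  have h3 : 2 ^ (k - 1) < 2 ^ k := Nat.pow_lt_pow_right (by norm_num) (by omega)
  have h4 : B.card < 2 ^ k := by omega
  omega

lemma metricDim_eq (hk : 2 ≤ k) : metricDim (Gk k) = k := by
  have hmem : k ∈ {m | ∃ Wf : Finset (Fin (k + 2 ^ k)),
      IsResolvingSet (Gk k) Wf ∧ Wf.card = m} := ⟨W k, W_resolving k, card_W k⟩
  refine le_antisymm (Nat.sInf_le hmem) ?_
  have hne : {m | ∃ Wf : Finset (Fin (k + 2 ^ k)),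
      IsResolvingSet (Gk k) Wf ∧ Wf.card = m}.Nonempty := ⟨k, hmem⟩
  obtain ⟨Wf, hWf, hWfc⟩ := Nat.sInf_mem hne
  rw [metricDim, ← hWfc]
  exact resolving_card_ge k Wf hWf hk

lemma two_pow_arith (hk : 2 ≤ k) {a : ℕ} (ha : 1 ≤ a) (hak : a ≤ k) :
    2 ^ (k - a) + a < 2 ^ k := by
  have h1 : 2 ^ (k - a) * 2 ^ a = 2 ^ k := by
    rw [← pow_add]; congr 1; omega
  have h2 : a < 2 ^ a := (Nat.lt_two_pow_self (n := a))
  by_cases hlt : a < k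
  · have h3 : 2 ≤ 2 ^ (k - a) := by
      calc 2 = 2 ^ 1 := rfl
        _ ≤ 2 ^ (k - a) := Nat.pow_le_pow_right (by norm_num) (by omega)
    nlinarith
  · -- a = k
    have hak' : a = k := by omega
    subst hak'
    have : a + 2 ≤ 2 ^ a := by
      clear h1 h2 hlt hak
      induction a with
      | zero => omega
      | succ m ih =>
        rcases Nat.lt_or_ge m 2 with hm | hm
        · interval_cases m
          · omega
          · norm_num
        · have := ih (by omega)
          have h2m : 2 ^ (m + 1) = 2 * 2 ^ m := by ring
          omega
    simp only [Nat.sub_self, pow_zero]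
    omega

/-- uniqueness: any resolving set of size `k` is `W k`. -/
lemma basis_unique (hk : 2 ≤ k) (B : Finset (Fin (k + 2 ^ k)))
    (hB : IsResolvingSet (Gk k) B) (hBc : B.card = k) : B = W k := by
  classical
  set a := (Finset.filter (fun x => k ≤ x.val) B).card with ha
  have hBsplit : (Finset.filter (fun x => x.val < k) B).card + a = k := by
    have h1 := Finset.card_filter_add_card_filter_not (s := B)
      (p := fun x => x.val < k)
    have h2 : Finset.filter (fun x => ¬ x.val < k) B =
        Finset.filter (fun x => k ≤ x.val) B := by
      apply Finset.filter_congr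
      intro x _
      exact not_lt
    rw [h2] at h1
    omega
  by_cases haz : a = 0
  · -- B ⊆ W, equal cards
    have hsub : B ⊆ W k := by
      intro x hx
      rw [mem_W]
      by_contra h
      push_neg at h
      have : x ∈ Finset.filter (fun x => k ≤ x.val) B := by
        simp [hx, h]
      rw [Finset.card_eq_zero] at haz
      rw [haz] at this
      simp at this
    exact Finset.eq_of_subset_of_card_le hsub (by rw [hBc, card_W])
  · -- contradiction
    exfalso
    have ha1 : 1 ≤ a := by omega
    have hak : a ≤ k := by omega
    set Bw : Finset (Fin (k + 2 ^ k)) := Finset.filter (fun x => x.val < k) B with hBw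
    have hBwc : Bw.card = k - a := by omega
    set S : Finset (Fin (k + 2 ^ k)) :=
      Finset.filter (fun x => k ≤ x.val) Finset.univ \ B with hSdef
    have hFGEc : (Finset.filter (fun x => k ≤ x.val) (Finset.univ :
        Finset (Fin (k + 2 ^ k)))).card = 2 ^ k := by
      have := card_W k
      rw [W] at this
      have h2 := Finset.card_filter_add_card_filter_not
        (s := (Finset.univ : Finset (Fin (k + 2 ^ k)))) (p := fun x => x.val < k)
      rw [Finset.card_univ, Fintype.card_fin, this] at h2
      have h3 : (Finset.filter (fun x => ¬ x.val < k) (Finset.univ :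
          Finset (Fin (k + 2 ^ k)))) = Finset.filter (fun x => k ≤ x.val) Finset.univ := by
        apply Finset.filter_congr
        intro x _
        exact not_lt
      rw [h3] at h2
      omega
    have hScard : S.card = 2 ^ k - a := by
      rw [hSdef]
      have hinter : (Finset.filter (fun x => k ≤ x.val) Finset.univ ∩ B) =
          Finset.filter (fun x => k ≤ x.val) B := by
        ext x; simp [and_comm]
      have := Finset.card_sdiff_add_card_inter
        (Finset.filter (fun x => k ≤ x.val) (Finset.univ : Finset (Fin (k + 2 ^ k)))) B
      rw [hinter, ← ha, hFGEc] at this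
      omega
    -- injective map from S to (Bw → Bool)
    have hcard2 : Fintype.card ↥S ≤ Fintype.card (↥Bw → Bool) := by
      apply Fintype.card_le_of_injective
        (fun v => (fun b => decide ((Gk k).dist v.val b.val = 2)))
      intro v v' hvv'
      by_contra hne
      have hne' : v.val ≠ v'.val := fun h => hne (Subtype.ext h)
      obtain ⟨b, hbB, hbd⟩ := hB v.val v'.val hne'
      have hvS : v.val ∈ Finset.filter (fun x => k ≤ x.val) Finset.univ \ B := v.2
      have hv'S : v'.val ∈ Finset.filter (fun x => k ≤ x.val) Finset.univ \ B := v'.2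
      simp only [Finset.mem_sdiff, Finset.mem_filter, Finset.mem_univ, true_and] at hvS hv'S
      by_cases hbk : b.val < k
      · -- b ∈ Bw : distances agree under the hypothesis
        have hbBw : b ∈ Bw := by rw [hBw]; simp [hbB, hbk]
        have hvb : v.val ≠ b := by intro h; omega
        have hv'b : v'.val ≠ b := by intro h; omega
        have h1 := dist_mem k hvb
        have h2 := dist_mem k hv'b
        have := congrFun hvv' ⟨b, hbBw⟩
        simp only [decide_eq_decide] at this
        rcases h1 with h1 | h1 <;> rcases h2 with h2 | h2 <;> omega
      · -- b is a subset vertex: both distances are 1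
        push_neg at hbk
        have hvb : v.val ≠ b := fun h => hvS.2 (h ▸ hbB)
        have hv'b : v'.val ≠ b := fun h => hv'S.2 (h ▸ hbB)
        have d1 : (Gk k).dist v.val b = 1 :=
          SimpleGraph.dist_eq_one_iff_adj.mpr (adj_uu k hvS.1 hbk hvb)
        have d2 : (Gk k).dist v'.val b = 1 :=
          SimpleGraph.dist_eq_one_iff_adj.mpr (adj_uu k hv'S.1 hbk hv'b)
        rw [d1, d2] at hbd
        exact hbd rfl
    rw [Fintype.card_fun, Fintype.card_coe, Fintype.card_coe, Fintype.card_bool,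
      hScard, hBwc] at hcard2
    have harith := two_pow_arith k hk ha1 hak
    have : a ≤ 2 ^ k := le_trans hak (le_of_lt ((Nat.lt_two_pow_self (n := k))))
    omega

lemma diam_eq_two (hk : 2 ≤ k) : (Gk k).diam = 2 := by
  have hediam : (Gk k).ediam ≤ 2 := by
    apply SimpleGraph.ediam_le_of_edist_le
    intro u v
    by_cases he : u = v
    · subst he
      rw [SimpleGraph.edist_self]
      norm_num
    by_cases ha : (Gk k).Adj u v
    · rw [SimpleGraph.edist_eq_one_iff_adj.mpr ha]
      norm_num
    · have hu : u ≠ full k := by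
        rintro rfl
        exact ha (adj_full k (fun h => he h.symm))
      have hv : v ≠ full k := by
        rintro rfl
        exact ha ((adj_full k he).symm)
      calc (Gk k).edist u v
          ≤ ((Walk.cons ((adj_full k hu).symm) (Walk.cons (adj_full k hv) Walk.nil)).length :
            ℕ∞) := SimpleGraph.Walk.edist_le _
        _ = 2 := by norm_num
  have hne : (Gk k).ediam ≠ ⊤ := fun h => by rw [h] at hediam; exact absurd hediam (by simp)
  have hle : (Gk k).diam ≤ 2 := by
    have h2 := ENat.toNat_le_toNat hediam (by norm_num : (2 : ℕ∞) ≠ ⊤)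
    simpa [SimpleGraph.diam] using h2
  have h1k : 1 < k + 2 ^ k := by have := onelt k; omega
  have huv : (⟨0, by omega⟩ : Fin (k + 2 ^ k)) ≠ ⟨1, by omega⟩ := by
    simp [Fin.ext_iff]
  have hna : ¬ (Gk k).Adj ⟨0, by omega⟩ ⟨1, by omega⟩ :=
    not_adj_ww k (by simpa using by omega) (by simpa using by omega)
  have hd : (Gk k).dist (⟨0, by omega⟩ : Fin (k + 2 ^ k)) ⟨1, by omega⟩ = 2 :=
    dist_eq_two k huv hna
  have hge : 2 ≤ (Gk k).diam := by
    calc 2 = (Gk k).dist (⟨0, by omega⟩ : Fin (k + 2 ^ k)) ⟨1, by omega⟩ := hd.symm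
      _ ≤ (Gk k).diam := SimpleGraph.dist_le_diam hne
  omega

lemma degree_full : Nat.card ((Gk k).neighborSet (full k)) = (k + 2 ^ k) - 1 := by
  have hset : (Gk k).neighborSet (full k) = {full k}ᶜ := by
    ext x
    simp only [SimpleGraph.mem_neighborSet, Set.mem_compl_iff, Set.mem_singleton_iff]
    constructor
    · intro h he
      exact (Gk k).loopless.irrefl _ (he ▸ h)
    · intro h
      exact adj_full k h
  rw [hset, Nat.card_eq_fintype_card, Fintype.card_compl_set]
  simp

end Stmt9Aux

theorem stmt9 (k : ℕ) (hk : 2 ≤ k) :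
    ∃ G : SimpleGraph (Fin (k + 2 ^ k)), G.Connected ∧ G.diam = 2 ∧
      UniquelyKDimensional G k ∧
      ∃ v, Nat.card (G.neighborSet v) = (k + 2 ^ k) - 1 := by
  refine ⟨Stmt9Aux.Gk k, Stmt9Aux.connected k, Stmt9Aux.diam_eq_two k hk, ⟨?_, Stmt9Aux.metricDim_eq k hk⟩,
    Stmt9Aux.full k, Stmt9Aux.degree_full k⟩
  refine ⟨Stmt9Aux.W k, ⟨Stmt9Aux.W_resolving k, by rw [Stmt9Aux.card_W, Stmt9Aux.metricDim_eq k hk]⟩, ?_⟩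
  intro B hB
  exact Stmt9Aux.basis_unique k hk B hB.1 (by rw [hB.2, Stmt9Aux.metricDim_eq k hk])
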